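/- arXiv:1211.2265 — 5 statements merged into one kernel-verified Lean document; each statement's English description precedes it below -/
import Mathlib

section
/- For all t ≥ 0, one has (√2 − 1)² · min(t, t²) ≤ (√(1+t) − 1)² ≤ min(t, t²). -/
/-- For all `t ≥ 0`,
`(√2 − 1)² · min(t, t²) ≤ (√(1+t) − 1)² ≤ min(t, t²)`. -/
theorem stmt1 (t : ℝ) (ht : 0 ≤ t) :
    (Real.sqrt 2 - 1) ^ 2 * min t (t ^ 2) ≤ (Real.sqrt (1 + t) - 1) ^ 2 ∧
    (Real.sqrt (1 + t) - 1) ^ 2 ≤ min t (t ^ 2) := by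
  set s := Real.sqrt (1 + t) with hsdef
  set a := Real.sqrt 2 with hadef
  have hs2 : s ^ 2 = 1 + t := Real.sq_sqrt (by linarith)
  have ha2 : a ^ 2 = 2 := Real.sq_sqrt (by norm_num)
  have hs1 : 1 ≤ s := by
    nlinarith [Real.sqrt_nonneg (1 + t)]
  have ha1 : 1 ≤ a := by
    nlinarith [Real.sqrt_nonneg 2]
  rcases le_total s a with hcase | hcase
  · -- t ≤ 1, min = t²
    have ht1 : t ≤ 1 := by nlinarith
    have hmin : min t (t ^ 2) = t ^ 2 := min_eq_right (by nlinarith)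
    rw [hmin]
    constructor
    · have h1 : (a - 1) * (s + 1) ≤ 1 := by nlinarith
      have h0 : 0 ≤ (a - 1) * (s + 1) := by nlinarith
      have htfac : t = (s - 1) * (s + 1) := by nlinarith
      calc (a - 1) ^ 2 * t ^ 2 = ((a - 1) * (s + 1)) ^ 2 * (s - 1) ^ 2 := by
            rw [htfac]; ring
        _ ≤ 1 ^ 2 * (s - 1) ^ 2 := by
            gcongr
        _ = (s - 1) ^ 2 := by ring
    · nlinarith [sq_nonneg (s - 1), sq_nonneg (s + 1)]
  · -- t ≥ 1, min = t
    have ht1 : 1 ≤ t := by nlinarith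
    have hmin : min t (t ^ 2) = t := min_eq_left (by nlinarith)
    rw [hmin]
    constructor
    · have key : (a - 1) ^ 2 * (s + 1) ≤ s - 1 := by nlinarith
      nlinarith [mul_nonneg (sub_nonneg.2 hs1) (sub_nonneg.2 hs1), sq_nonneg (a - 1),
        mul_le_mul_of_nonneg_left key (sub_nonneg.2 hs1)]
    · nlinarith [sq_nonneg (s - 1)]
end

section
/- Let P, Q₀, Q₁ be probability measures with Q₁ mutually singular with respect to P, and let 0 ≤ ε ≤ 1. Then H²(P, (1−ε)Q₀ + εQ₁) = 2(1 − √(1−ε)) + √(1−ε) · H²(P, Q₀). -/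
open MeasureTheory

/-- The squared Hellinger distance `H²(P,Q)`, computed with the dominating measure `P + Q`. -/
noncomputable def sqHellinger {α : Type*} [MeasurableSpace α] (P Q : Measure α) : ℝ :=
  ∫ x, (Real.sqrt ((Measure.rnDeriv P (P + Q)) x).toReal
      - Real.sqrt ((Measure.rnDeriv Q (P + Q)) x).toReal) ^ 2 ∂(P + Q)

/-- Change of dominating measure for the squared Hellinger distance. -/
lemma sqHellinger_eq_integral {α : Type*} [MeasurableSpace α] (P Q ν : Measure α)
    [IsFiniteMeasure P] [IsFiniteMeasure Q] [IsFiniteMeasure ν]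
    (hP : P ≪ ν) (hQ : Q ≪ ν) :
    sqHellinger P Q = ∫ x, (Real.sqrt ((Measure.rnDeriv P ν) x).toReal
      - Real.sqrt ((Measure.rnDeriv Q ν) x).toReal) ^ 2 ∂ν := by
  have hμν : (P + Q) ≪ ν := Measure.AbsolutelyContinuous.add_left hP hQ
  have hPμ : P ≪ (P + Q) := Measure.absolutelyContinuous_of_le (Measure.le_add_right le_rfl)
  have hQμ : Q ≪ (P + Q) := Measure.absolutelyContinuous_of_le (Measure.le_add_left le_rfl)
  have h1 := Measure.rnDeriv_mul_rnDeriv (κ := ν) hPμ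
  have h2 := Measure.rnDeriv_mul_rnDeriv (κ := ν) hQμ
  rw [sqHellinger, ← integral_rnDeriv_smul hμν
    (f := fun x => (Real.sqrt ((Measure.rnDeriv P (P + Q)) x).toReal
      - Real.sqrt ((Measure.rnDeriv Q (P + Q)) x).toReal) ^ 2)]
  refine integral_congr_ae ?_
  filter_upwards [h1, h2] with x h1x h2x
  rw [smul_eq_mul, ← h1x, ← h2x, Pi.mul_apply, Pi.mul_apply, ENNReal.toReal_mul,
    ENNReal.toReal_mul, Real.sqrt_mul ENNReal.toReal_nonneg, Real.sqrt_mul ENNReal.toReal_nonneg,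
    ← sub_mul, mul_pow, Real.sq_sqrt ENNReal.toReal_nonneg, mul_comm]

lemma sqHellinger_expand {α : Type*} [MeasurableSpace α] (P Q ν : Measure α)
    [IsFiniteMeasure P] [IsFiniteMeasure Q] [IsFiniteMeasure ν]
    (hP : P ≪ ν) (hQ : Q ≪ ν) :
    sqHellinger P Q = (P Set.univ).toReal + (Q Set.univ).toReal
      - 2 * ∫ x, Real.sqrt (((Measure.rnDeriv P ν) x).toReal
          * ((Measure.rnDeriv Q ν) x).toReal) ∂ν := by
  have hf : Integrable (fun x => ((Measure.rnDeriv P ν) x).toReal) ν :=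
    Measure.integrable_toReal_rnDeriv
  have hg : Integrable (fun x => ((Measure.rnDeriv Q ν) x).toReal) ν :=
    Measure.integrable_toReal_rnDeriv
  have hmeas : Measurable (fun x => Real.sqrt (((Measure.rnDeriv P ν) x).toReal
      * ((Measure.rnDeriv Q ν) x).toReal)) :=
    ((Measure.measurable_rnDeriv P ν).ennreal_toReal.mul
      (Measure.measurable_rnDeriv Q ν).ennreal_toReal).sqrt
  have hbound : ∀ x, ‖Real.sqrt (((Measure.rnDeriv P ν) x).toReal
      * ((Measure.rnDeriv Q ν) x).toReal)‖
      ≤ ‖((Measure.rnDeriv P ν) x).toReal + ((Measure.rnDeriv Q ν) x).toReal‖ := by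
    intro x
    set a := ((Measure.rnDeriv P ν) x).toReal with ha
    set b := ((Measure.rnDeriv Q ν) x).toReal with hb
    have ha0 : 0 ≤ a := ENNReal.toReal_nonneg
    have hb0 : 0 ≤ b := ENNReal.toReal_nonneg
    rw [Real.norm_eq_abs, Real.norm_eq_abs, abs_of_nonneg (Real.sqrt_nonneg _),
      abs_of_nonneg (by positivity)]
    have h2 : 2 * Real.sqrt a * Real.sqrt b ≤ Real.sqrt a ^ 2 + Real.sqrt b ^ 2 :=
      two_mul_le_add_sq _ _
    rw [Real.sq_sqrt ha0, Real.sq_sqrt hb0] at h2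
    have := Real.sqrt_mul ha0 b
    nlinarith [Real.sqrt_nonneg a, Real.sqrt_nonneg b]
  have hint : Integrable (fun x => Real.sqrt (((Measure.rnDeriv P ν) x).toReal
      * ((Measure.rnDeriv Q ν) x).toReal)) ν :=
    Integrable.mono (hf.add hg) hmeas.aestronglyMeasurable (Filter.Eventually.of_forall hbound)
  rw [sqHellinger_eq_integral P Q ν hP hQ]
  have hcongr : ∀ x, (Real.sqrt ((Measure.rnDeriv P ν) x).toReal
      - Real.sqrt ((Measure.rnDeriv Q ν) x).toReal) ^ 2
      = (((Measure.rnDeriv P ν) x).toReal + ((Measure.rnDeriv Q ν) x).toReal)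
        - 2 * Real.sqrt (((Measure.rnDeriv P ν) x).toReal
            * ((Measure.rnDeriv Q ν) x).toReal) := by
    intro x
    rw [sub_sq, Real.sq_sqrt ENNReal.toReal_nonneg, Real.sq_sqrt ENNReal.toReal_nonneg,
      Real.sqrt_mul ENNReal.toReal_nonneg]
    ring
  simp_rw [hcongr]
  have hfg : Integrable (fun x => ((Measure.rnDeriv P ν) x).toReal
      + ((Measure.rnDeriv Q ν) x).toReal) ν := hf.add hg
  have hint2 : Integrable (fun x => 2 * Real.sqrt (((Measure.rnDeriv P ν) x).toReal
      * ((Measure.rnDeriv Q ν) x).toReal)) ν := hint.const_mul 2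
  rw [integral_sub hfg hint2, integral_add hf hg, integral_const_mul,
    Measure.integral_toReal_rnDeriv hP, Measure.integral_toReal_rnDeriv hQ]
  rfl

/-- If `Q₁ ⟂ P` and `0 ≤ ε ≤ 1`, then
`H²(P, (1−ε)Q₀ + εQ₁) = 2(1 − √(1−ε)) + √(1−ε)·H²(P, Q₀)`. -/
theorem stmt6 {α : Type*} [MeasurableSpace α] (P Q₀ Q₁ : Measure α)
    [IsProbabilityMeasure P] [IsProbabilityMeasure Q₀] [IsProbabilityMeasure Q₁]
    (hsing : Q₁ ⟂ₘ P) (ε : ℝ) (hε0 : 0 ≤ ε) (hε1 : ε ≤ 1) :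
    sqHellinger P (ENNReal.ofReal (1 - ε) • Q₀ + ENNReal.ofReal ε • Q₁)
      = 2 * (1 - Real.sqrt (1 - ε)) + Real.sqrt (1 - ε) * sqHellinger P Q₀ := by
  have hε1' : (0:ℝ) ≤ 1 - ε := by linarith
  set ν : Measure α := P + Q₀ + Q₁ with hν
  set Q : Measure α := ENNReal.ofReal (1 - ε) • Q₀ + ENNReal.ofReal ε • Q₁ with hQdef
  have hQ0fin : IsFiniteMeasure (ENNReal.ofReal (1 - ε) • Q₀) := by
    constructor
    rw [Measure.smul_apply, smul_eq_mul, measure_univ, mul_one]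
    exact ENNReal.ofReal_lt_top
  have hQ1fin : IsFiniteMeasure (ENNReal.ofReal ε • Q₁) := by
    constructor
    rw [Measure.smul_apply, smul_eq_mul, measure_univ, mul_one]
    exact ENNReal.ofReal_lt_top
  have hQfin : IsFiniteMeasure Q := by rw [hQdef]; infer_instance
  have hPν : P ≪ ν :=
    Measure.absolutelyContinuous_of_le (le_trans (Measure.le_add_right le_rfl)
      (Measure.le_add_right le_rfl))
  have hQ₀ν : Q₀ ≪ ν :=
    Measure.absolutelyContinuous_of_le (le_trans (Measure.le_add_left le_rfl)
      (Measure.le_add_right le_rfl))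
  have hQ₁ν : Q₁ ≪ ν := Measure.absolutelyContinuous_of_le (Measure.le_add_left le_rfl)
  have hQν : Q ≪ ν :=
    Measure.AbsolutelyContinuous.add_left
      ((Measure.smul_absolutelyContinuous).trans hQ₀ν)
      ((Measure.smul_absolutelyContinuous).trans hQ₁ν)
  -- total mass of Q
  have hQuniv : (Q Set.univ).toReal = 1 := by
    rw [hQdef]
    simp only [Measure.add_apply, Measure.smul_apply, smul_eq_mul, measure_univ, mul_one]
    rw [ENNReal.toReal_add ENNReal.ofReal_ne_top ENNReal.ofReal_ne_top,
      ENNReal.toReal_ofReal hε1', ENNReal.toReal_ofReal hε0]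
    ring
  -- the singularity set
  obtain ⟨E, hEm, hPE, hQ₁E⟩ := hsing.symm
  -- rnDeriv of P vanishes a.e. on E
  have hPzero : ∀ᵐ x ∂ν, x ∈ E → Measure.rnDeriv P ν x = 0 := by
    have h0 : ∫⁻ x in E, Measure.rnDeriv P ν x ∂ν = 0 := by
      rw [Measure.setLIntegral_rnDeriv' hPν hEm, hPE]
    rw [lintegral_eq_zero_iff (Measure.measurable_rnDeriv P ν)] at h0
    exact (ae_restrict_iff' hEm).mp h0
  have hQ₁zero : ∀ᵐ x ∂ν, x ∉ E → Measure.rnDeriv Q₁ ν x = 0 := by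
    have h0 : ∫⁻ x in Eᶜ, Measure.rnDeriv Q₁ ν x ∂ν = 0 := by
      rw [Measure.setLIntegral_rnDeriv' hQ₁ν hEm.compl, hQ₁E]
    rw [lintegral_eq_zero_iff (Measure.measurable_rnDeriv Q₁ ν)] at h0
    exact (ae_restrict_iff' hEm.compl).mp h0
  -- rnDeriv of Q
  have hQderiv : Measure.rnDeriv Q ν =ᵐ[ν]
      fun x => ENNReal.ofReal (1 - ε) * Measure.rnDeriv Q₀ ν x
        + ENNReal.ofReal ε * Measure.rnDeriv Q₁ ν x := by
    have hadd := Measure.rnDeriv_add (ENNReal.ofReal (1 - ε) • Q₀) (ENNReal.ofReal ε • Q₁) ν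
    have hs0 := Measure.rnDeriv_smul_left_of_ne_top Q₀ ν (r := ENNReal.ofReal (1 - ε))
      ENNReal.ofReal_ne_top
    have hs1 := Measure.rnDeriv_smul_left_of_ne_top Q₁ ν (r := ENNReal.ofReal ε)
      ENNReal.ofReal_ne_top
    filter_upwards [hadd, hs0, hs1] with x hx h0x h1x
    rw [hQdef] at *
    rw [hx, Pi.add_apply, h0x, h1x, Pi.smul_apply, Pi.smul_apply, smul_eq_mul, smul_eq_mul]
  -- key identity for the Bhattacharyya integrand
  have hkey : (fun x => Real.sqrt ((Measure.rnDeriv P ν x).toReal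
      * (Measure.rnDeriv Q ν x).toReal)) =ᵐ[ν]
      fun x => Real.sqrt (1 - ε) * Real.sqrt ((Measure.rnDeriv P ν x).toReal
        * (Measure.rnDeriv Q₀ ν x).toReal) := by
    filter_upwards [hPzero, hQ₁zero, hQderiv] with x hPx hQ₁x hQx
    by_cases hxE : x ∈ E
    · rw [hPx hxE]
      simp
    · rw [hQx, hQ₁x hxE, mul_zero, add_zero, ENNReal.toReal_mul,
        ENNReal.toReal_ofReal hε1', ← mul_assoc, mul_comm _ (1 - ε), mul_assoc,
        Real.sqrt_mul hε1']
  have hI : ∫ x, Real.sqrt ((Measure.rnDeriv P ν x).toReal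
        * (Measure.rnDeriv Q ν x).toReal) ∂ν
      = Real.sqrt (1 - ε) * ∫ x, Real.sqrt ((Measure.rnDeriv P ν x).toReal
        * (Measure.rnDeriv Q₀ ν x).toReal) ∂ν := by
    rw [integral_congr_ae hkey, integral_const_mul]
  rw [sqHellinger_expand P Q ν hPν hQν, sqHellinger_expand P Q₀ ν hPν hQ₀ν,
    hQuniv, hI]
  simp only [measure_univ, ENNReal.toReal_one]
  ring
end

section
/- Let P, Q₀, Q₁ be probability measures with Q₁ ⟂ P and 0 ≤ ε ≤ 1. Then (1/4)·max(ε, H²(P,Q₀)) ≤ H²(P, (1−ε)Q₀ + εQ₁) ≤ 4·max(ε, H²(P,Q₀)). -/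
open MeasureTheory

section Aux
variable {α : Type*} [MeasurableSpace α]

/-- Hellinger affinity with respect to a dominating measure. -/
noncomputable def affH (P Q μ : Measure α) : ℝ :=
  ∫ x, Real.sqrt ((Measure.rnDeriv P μ x).toReal * (Measure.rnDeriv Q μ x).toReal) ∂μ

lemma affH_nonneg (P Q μ : Measure α) : 0 ≤ affH P Q μ :=
  integral_nonneg fun _ => Real.sqrt_nonneg _

lemma measurable_sqrt_mul (P Q μ : Measure α) :
    Measurable (fun x => Real.sqrt ((Measure.rnDeriv P μ x).toReal
      * (Measure.rnDeriv Q μ x).toReal)) :=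
  Real.continuous_sqrt.measurable.comp (((Measure.measurable_rnDeriv P μ).ennreal_toReal).mul
    ((Measure.measurable_rnDeriv Q μ).ennreal_toReal))

lemma integrable_sqrt_mul (P Q μ : Measure α) [IsFiniteMeasure P] [IsFiniteMeasure Q] :
    Integrable (fun x => Real.sqrt ((Measure.rnDeriv P μ x).toReal
      * (Measure.rnDeriv Q μ x).toReal)) μ := by
  have hP : Integrable (fun x => (Measure.rnDeriv P μ x).toReal) μ :=
    Measure.integrable_toReal_rnDeriv
  have hQ : Integrable (fun x => (Measure.rnDeriv Q μ x).toReal) μ :=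
    Measure.integrable_toReal_rnDeriv
  refine (hP.add hQ).mono' (measurable_sqrt_mul P Q μ).aestronglyMeasurable ?_
  refine Filter.Eventually.of_forall fun x => ?_
  set a := (Measure.rnDeriv P μ x).toReal
  set b := (Measure.rnDeriv Q μ x).toReal
  have ha : 0 ≤ a := ENNReal.toReal_nonneg
  have hb : 0 ≤ b := ENNReal.toReal_nonneg
  rw [Real.norm_of_nonneg (Real.sqrt_nonneg _), Real.sqrt_mul ha]
  simp only [Pi.add_apply]
  nlinarith [two_mul_le_add_sq (Real.sqrt a) (Real.sqrt b), Real.sq_sqrt ha, Real.sq_sqrt hb,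
    mul_nonneg (Real.sqrt_nonneg a) (Real.sqrt_nonneg b)]

lemma sqHellinger_eq (P Q : Measure α) [IsProbabilityMeasure P] [IsProbabilityMeasure Q] :
    sqHellinger P Q = 2 - 2 * affH P Q (P + Q) := by
  have hP : P ≪ P + Q := (Measure.le_add_right le_rfl).absolutelyContinuous
  have hQ : Q ≪ P + Q := (Measure.le_add_left le_rfl).absolutelyContinuous
  have hPi : Integrable (fun x => (Measure.rnDeriv P (P + Q) x).toReal) (P + Q) :=
    Measure.integrable_toReal_rnDeriv
  have hQi : Integrable (fun x => (Measure.rnDeriv Q (P + Q) x).toReal) (P + Q) :=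
    Measure.integrable_toReal_rnDeriv
  have hSi := integrable_sqrt_mul P Q (P + Q)
  have hfun : (fun x => (Real.sqrt ((Measure.rnDeriv P (P + Q)) x).toReal
      - Real.sqrt ((Measure.rnDeriv Q (P + Q)) x).toReal) ^ 2)
      = fun x => ((Measure.rnDeriv P (P + Q) x).toReal + (Measure.rnDeriv Q (P + Q) x).toReal)
        - 2 * Real.sqrt ((Measure.rnDeriv P (P + Q) x).toReal
          * (Measure.rnDeriv Q (P + Q) x).toReal) := by
    funext x
    set a := (Measure.rnDeriv P (P + Q) x).toReal
    set b := (Measure.rnDeriv Q (P + Q) x).toReal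
    have ha : 0 ≤ a := ENNReal.toReal_nonneg
    have hb : 0 ≤ b := ENNReal.toReal_nonneg
    rw [Real.sqrt_mul ha]
    nlinarith [Real.sq_sqrt ha, Real.sq_sqrt hb]
  have hadd : Integrable (fun x => (Measure.rnDeriv P (P + Q) x).toReal
      + (Measure.rnDeriv Q (P + Q) x).toReal) (P + Q) := hPi.add hQi
  rw [sqHellinger, hfun, integral_sub hadd (hSi.const_mul 2),
    integral_add hPi hQi, integral_const_mul,
    Measure.integral_toReal_rnDeriv hP, Measure.integral_toReal_rnDeriv hQ]
  simp [affH]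
  ring

lemma sqHellinger_nonneg (P Q : Measure α) : 0 ≤ sqHellinger P Q :=
  integral_nonneg fun _ => sq_nonneg _

/-- If `Q ⟂ P` then the product of their RN derivatives w.r.t. any `μ` vanishes a.e. -/
lemma mul_rnDeriv_ae_zero (P Q μ : Measure α) (hs : Q ⟂ₘ P) :
    (fun x => Measure.rnDeriv P μ x * Measure.rnDeriv Q μ x) =ᵐ[μ] 0 := by
  obtain ⟨S, hSm, hPS, hQS⟩ := hs.symm
  have h1 : Measure.rnDeriv P μ =ᵐ[μ.restrict S] 0 := by
    rw [← lintegral_eq_zero_iff (Measure.measurable_rnDeriv P μ)]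
    exact le_antisymm (hPS ▸ Measure.setLIntegral_rnDeriv_le S) zero_le
  have h2 : Measure.rnDeriv Q μ =ᵐ[μ.restrict Sᶜ] 0 := by
    rw [← lintegral_eq_zero_iff (Measure.measurable_rnDeriv Q μ)]
    exact le_antisymm (hQS ▸ Measure.setLIntegral_rnDeriv_le Sᶜ) zero_le
  have hμ : μ.restrict S + μ.restrict Sᶜ = μ := Measure.restrict_add_restrict_compl hSm
  have key : ∀ᵐ x ∂(μ.restrict S + μ.restrict Sᶜ),
      Measure.rnDeriv P μ x * Measure.rnDeriv Q μ x = 0 := by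
    rw [ae_add_measure_iff]
    constructor
    · filter_upwards [h1] with x hx
      simp only [Pi.zero_apply] at hx
      simp [hx]
    · filter_upwards [h2] with x hx
      simp only [Pi.zero_apply] at hx
      simp [hx]
  rw [hμ] at key
  exact key.mono fun x hx => by simpa using hx

/-- The affinity does not depend on the dominating measure. -/
lemma affH_base (P Q ν μ : Measure α) [SigmaFinite P] [SigmaFinite Q] [SigmaFinite ν]
    [SigmaFinite μ] (hν : ν ≪ μ) (hP : P ≪ ν) (hQ : Q ≪ ν) :
    affH P Q μ = affH P Q ν := by
  rw [affH, affH, ← integral_rnDeriv_smul hν]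
  refine integral_congr_ae ?_
  filter_upwards [Measure.rnDeriv_mul_rnDeriv hP (κ := μ),
    Measure.rnDeriv_mul_rnDeriv hQ (κ := μ)] with x hpx hqx
  rw [← hpx, ← hqx, Pi.mul_apply, Pi.mul_apply, ENNReal.toReal_mul, ENNReal.toReal_mul]
  set p := (Measure.rnDeriv P ν x).toReal
  set q := (Measure.rnDeriv Q ν x).toReal
  set h := (Measure.rnDeriv ν μ x).toReal
  rw [show p * h * (q * h) = h ^ 2 * (p * q) by ring, Real.sqrt_mul (sq_nonneg h),
    Real.sqrt_sq ENNReal.toReal_nonneg, smul_eq_mul]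

end Aux
/-- If `Q₁ ⟂ P` and `0 ≤ ε ≤ 1`, then
`(1/4)·max(ε, H²(P,Q₀)) ≤ H²(P, (1−ε)Q₀ + εQ₁) ≤ 4·max(ε, H²(P,Q₀))`. -/
theorem stmt7 {α : Type*} [MeasurableSpace α] (P Q₀ Q₁ : Measure α)
    [IsProbabilityMeasure P] [IsProbabilityMeasure Q₀] [IsProbabilityMeasure Q₁]
    (hsing : Q₁ ⟂ₘ P) (ε : ℝ) (hε0 : 0 ≤ ε) (hε1 : ε ≤ 1) :
    (1 / 4) * max ε (sqHellinger P Q₀)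
        ≤ sqHellinger P (ENNReal.ofReal (1 - ε) • Q₀ + ENNReal.ofReal ε • Q₁) ∧
    sqHellinger P (ENNReal.ofReal (1 - ε) • Q₀ + ENNReal.ofReal ε • Q₁)
        ≤ 4 * max ε (sqHellinger P Q₀) := by
  set c₀ := ENNReal.ofReal (1 - ε) with hc₀
  set c₁ := ENNReal.ofReal ε with hc₁
  set Qε := c₀ • Q₀ + c₁ • Q₁ with hQεdef
  haveI hf0 : IsFiniteMeasure (c₀ • Q₀) :=
    ⟨by rw [Measure.smul_apply, smul_eq_mul, measure_univ, mul_one]; exact ENNReal.ofReal_lt_top⟩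
  haveI hf1 : IsFiniteMeasure (c₁ • Q₁) :=
    ⟨by rw [Measure.smul_apply, smul_eq_mul, measure_univ, mul_one]; exact ENNReal.ofReal_lt_top⟩
  haveI hQεprob : IsProbabilityMeasure Qε := by
    constructor
    rw [hQεdef, Measure.add_apply, Measure.smul_apply, Measure.smul_apply, smul_eq_mul,
      smul_eq_mul, measure_univ, measure_univ, mul_one, mul_one, hc₀, hc₁,
      ← ENNReal.ofReal_add (by linarith) hε0, sub_add_cancel, ENNReal.ofReal_one]
  set μ := P + Qε with hμdef
  -- the affinity identity
  have hA : affH P Qε μ = Real.sqrt (1 - ε) * affH P Q₀ (P + Q₀) := by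
    have step1 : affH P Qε μ = Real.sqrt (1 - ε)
        * ∫ x, Real.sqrt ((Measure.rnDeriv P μ x).toReal
            * (Measure.rnDeriv Q₀ μ x).toReal) ∂μ := by
      rw [affH, ← integral_const_mul]
      refine integral_congr_ae ?_
      filter_upwards [Measure.rnDeriv_add (c₀ • Q₀) (c₁ • Q₁) μ,
        Measure.rnDeriv_smul_left_of_ne_top Q₀ μ (ENNReal.ofReal_ne_top : c₀ ≠ ⊤),
        Measure.rnDeriv_smul_left_of_ne_top Q₁ μ (ENNReal.ofReal_ne_top : c₁ ≠ ⊤),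
        mul_rnDeriv_ae_zero P Q₁ μ hsing,
        Measure.rnDeriv_ne_top Q₀ μ, Measure.rnDeriv_ne_top Q₁ μ] with x h1 h2 h3 h4 h5 h6
      rw [hQεdef, h1, Pi.add_apply, h2, h3, Pi.smul_apply, Pi.smul_apply, smul_eq_mul,
        smul_eq_mul]
      have hfin : c₀ * Measure.rnDeriv Q₀ μ x ≠ ⊤ := ENNReal.mul_ne_top ENNReal.ofReal_ne_top h5
      have hfin' : c₁ * Measure.rnDeriv Q₁ μ x ≠ ⊤ := ENNReal.mul_ne_top ENNReal.ofReal_ne_top h6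
      rw [ENNReal.toReal_add hfin hfin', ENNReal.toReal_mul, ENNReal.toReal_mul]
      have h4' : (Measure.rnDeriv P μ x).toReal * (Measure.rnDeriv Q₁ μ x).toReal = 0 := by
        have := congrArg ENNReal.toReal h4
        rwa [ENNReal.toReal_mul, Pi.zero_apply, ENNReal.toReal_zero] at this
      set a := (Measure.rnDeriv P μ x).toReal
      set b := (Measure.rnDeriv Q₀ μ x).toReal
      set c := (Measure.rnDeriv Q₁ μ x).toReal
      have ha : 0 ≤ a := ENNReal.toReal_nonneg
      have hb : 0 ≤ b := ENNReal.toReal_nonneg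
      have hc0r : c₀.toReal = 1 - ε := by rw [hc₀, ENNReal.toReal_ofReal (by linarith)]
      rw [mul_add, mul_comm c₀.toReal b, mul_comm c₁.toReal c, ← mul_assoc, ← mul_assoc, h4',
        zero_mul, add_zero, mul_comm (a * b) c₀.toReal, hc0r,
        Real.sqrt_mul (by linarith : (0:ℝ) ≤ 1 - ε)]
    by_cases hε : ε = 1
    · rw [step1, hε]
      simp
    · have hlt : ε < 1 := lt_of_le_of_ne hε1 hε
      have hPν : P ≪ P + Q₀ := (Measure.le_add_right le_rfl).absolutelyContinuous
      have hQν : Q₀ ≪ P + Q₀ := (Measure.le_add_left le_rfl).absolutelyContinuous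
      have hνμ : P + Q₀ ≪ μ := by
        have hQ₀μ : Q₀ ≪ μ := by
          refine (Measure.absolutelyContinuous_smul ?_).trans
            ((Measure.le_add_left (Measure.le_add_right le_rfl)).absolutelyContinuous
              (μ := c₀ • Q₀) (ν := μ))
          rw [hc₀, Ne, ENNReal.ofReal_eq_zero, not_le]
          linarith
        intro s hs
        rw [Measure.add_apply, (Measure.le_add_right le_rfl).absolutelyContinuous hs,
          hQ₀μ hs, add_zero]
      rw [step1]
      have := affH_base P Q₀ (P + Q₀) μ hνμ hPν hQν
      rw [affH] at this
      rw [this]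
  -- expansion of both Hellinger distances
  have hH₀ : sqHellinger P Q₀ = 2 - 2 * affH P Q₀ (P + Q₀) := sqHellinger_eq P Q₀
  have hHε : sqHellinger P Qε = 2 - 2 * (Real.sqrt (1 - ε) * affH P Q₀ (P + Q₀)) := by
    rw [sqHellinger_eq P Qε, hA]
  -- numeric bounds
  set A := affH P Q₀ (P + Q₀) with hAdef
  have hA0 : 0 ≤ A := affH_nonneg _ _ _
  have hh0 : 0 ≤ sqHellinger P Q₀ := sqHellinger_nonneg _ _
  have hh2 : sqHellinger P Q₀ ≤ 2 := by rw [hH₀]; linarith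
  set s := Real.sqrt (1 - ε) with hsdef
  have hs0 : 0 ≤ s := Real.sqrt_nonneg _
  have hs1 : s ≤ 1 := by
    rw [hsdef]
    exact Real.sqrt_le_one.mpr (by linarith)
  have hs2 : s ^ 2 = 1 - ε := Real.sq_sqrt (by linarith)
  have hAeq : 2 * A = 2 - sqHellinger P Q₀ := by rw [hH₀]; ring
  set h₀ := sqHellinger P Q₀ with hh₀def
  have hmax1 : ε ≤ max ε h₀ := le_max_left _ _
  have hmax2 : h₀ ≤ max ε h₀ := le_max_right _ _
  have hmax0 : 0 ≤ max ε h₀ := le_trans hε0 hmax1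
  have hHεval : sqHellinger P Qε = 2 - s * (2 - h₀) := by
    rw [hHε]; nlinarith [hAeq]
  constructor
  · rw [hHεval]
    have hge1 : ε ≤ 2 - s * (2 - h₀) := by nlinarith
    have hge2 : h₀ ≤ 2 - s * (2 - h₀) := by nlinarith
    rcases max_cases ε h₀ with ⟨hm, _⟩ | ⟨hm, _⟩ <;> rw [hm] <;> nlinarith
  · rw [hHεval]
    have h1s : 1 - s ≤ ε := by nlinarith
    nlinarith
end

section
/- For any probability measures P and Q, the map ε ↦ H²(P, (1−ε)P + εQ) is nondecreasing on [0,1]; more precisely, for 0 ≤ ε < ε′ ≤ 1, H²((1−ε)P + εQ, P) ≤ (ε/ε′)·H²((1−ε′)P + ε′Q, P). -/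
open MeasureTheory

section Aux

variable {α : Type*} [MeasurableSpace α]

private lemma sqrt_sub_sq_le_add' {a b : ℝ} (ha : 0 ≤ a) (hb : 0 ≤ b) :
    (Real.sqrt a - Real.sqrt b) ^ 2 ≤ a + b := by
  nlinarith [Real.sq_sqrt ha, Real.sq_sqrt hb,
    mul_nonneg (Real.sqrt_nonneg a) (Real.sqrt_nonneg b)]

private lemma ptwise' {t x y : ℝ} (ht0 : 0 ≤ t) (ht1 : t ≤ 1) (hx : 0 ≤ x) (hy : 0 ≤ y) :
    (Real.sqrt (t * x + (1 - t) * y) - Real.sqrt y) ^ 2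
      ≤ t * (Real.sqrt x - Real.sqrt y) ^ 2 := by
  have h1t : (0:ℝ) ≤ 1 - t := by linarith
  have hmix : 0 ≤ t * x + (1 - t) * y :=
    add_nonneg (mul_nonneg ht0 hx) (mul_nonneg h1t hy)
  have hconc : t * Real.sqrt x + (1 - t) * Real.sqrt y
      ≤ Real.sqrt (t * x + (1 - t) * y) := by
    rw [Real.le_sqrt (add_nonneg (mul_nonneg ht0 (Real.sqrt_nonneg x))
      (mul_nonneg h1t (Real.sqrt_nonneg y))) hmix]
    nlinarith [Real.sq_sqrt hx, Real.sq_sqrt hy,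
      sq_nonneg (Real.sqrt x - Real.sqrt y), mul_nonneg ht0 h1t]
  nlinarith [Real.sq_sqrt hx, Real.sq_sqrt hy, Real.sq_sqrt hmix,
    mul_le_mul_of_nonneg_left hconc (Real.sqrt_nonneg y)]

private lemma sqHellinger_eq_base' (μ ν σ : Measure α) [IsFiniteMeasure μ] [IsFiniteMeasure ν]
    [IsFiniteMeasure σ] (hμ : μ ≪ σ) (hν : ν ≪ σ) :
    sqHellinger μ ν = ∫ x, (Real.sqrt ((μ.rnDeriv σ) x).toReal
      - Real.sqrt ((ν.rnDeriv σ) x).toReal) ^ 2 ∂σ := by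
  have hρ : μ + ν ≪ σ := Measure.AbsolutelyContinuous.add_left_iff.mpr ⟨hμ, hν⟩
  have hμρ : μ ≪ μ + ν := fun s hs => by
    rw [Measure.coe_add, Pi.add_apply, add_eq_zero] at hs; exact hs.1
  have hνρ : ν ≪ μ + ν := fun s hs => by
    rw [Measure.coe_add, Pi.add_apply, add_eq_zero] at hs; exact hs.2
  rw [sqHellinger, ← integral_rnDeriv_smul hρ]
  refine integral_congr_ae ?_
  filter_upwards [Measure.rnDeriv_mul_rnDeriv hμρ (κ := σ),
    Measure.rnDeriv_mul_rnDeriv hνρ (κ := σ)] with x h1 h2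
  rw [← h1, ← h2, Pi.mul_apply, Pi.mul_apply, ENNReal.toReal_mul, ENNReal.toReal_mul,
    Real.sqrt_mul ENNReal.toReal_nonneg, Real.sqrt_mul ENNReal.toReal_nonneg, smul_eq_mul]
  have hc := Real.sq_sqrt (ENNReal.toReal_nonneg (a := ((μ + ν).rnDeriv σ) x))
  linear_combination -(Real.sqrt (μ.rnDeriv (μ + ν) x).toReal
    - Real.sqrt (ν.rnDeriv (μ + ν) x).toReal) ^ 2 * hc

private lemma isFiniteMeasure_mix' (P Q : Measure α) [IsFiniteMeasure P] [IsFiniteMeasure Q]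
    (a b : ℝ) : IsFiniteMeasure (ENNReal.ofReal a • P + ENNReal.ofReal b • Q) := by
  haveI : IsFiniteMeasure (ENNReal.ofReal a • P) :=
    ⟨by rw [Measure.smul_apply, smul_eq_mul]
        exact ENNReal.mul_lt_top ENNReal.ofReal_lt_top (measure_lt_top _ _)⟩
  haveI : IsFiniteMeasure (ENNReal.ofReal b • Q) :=
    ⟨by rw [Measure.smul_apply, smul_eq_mul]
        exact ENNReal.mul_lt_top ENNReal.ofReal_lt_top (measure_lt_top _ _)⟩
  infer_instance

private lemma mix_rnDeriv_toReal' (P Q : Measure α) [IsFiniteMeasure P] [IsFiniteMeasure Q]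
    {a b : ℝ} (ha : 0 ≤ a) (hb : 0 ≤ b) :
    ∀ᵐ x ∂(P + Q), ((ENNReal.ofReal a • P + ENNReal.ofReal b • Q).rnDeriv (P + Q) x).toReal
      = a * (P.rnDeriv (P + Q) x).toReal + b * (Q.rnDeriv (P + Q) x).toReal := by
  haveI : IsFiniteMeasure (ENNReal.ofReal a • P) :=
    ⟨by rw [Measure.smul_apply, smul_eq_mul]
        exact ENNReal.mul_lt_top ENNReal.ofReal_lt_top (measure_lt_top _ _)⟩
  haveI : IsFiniteMeasure (ENNReal.ofReal b • Q) :=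
    ⟨by rw [Measure.smul_apply, smul_eq_mul]
        exact ENNReal.mul_lt_top ENNReal.ofReal_lt_top (measure_lt_top _ _)⟩
  filter_upwards [Measure.rnDeriv_add (ENNReal.ofReal a • P) (ENNReal.ofReal b • Q) (P + Q),
    Measure.rnDeriv_smul_left_of_ne_top P (P + Q) ENNReal.ofReal_ne_top,
    Measure.rnDeriv_smul_left_of_ne_top Q (P + Q) ENNReal.ofReal_ne_top,
    Measure.rnDeriv_lt_top P (P + Q), Measure.rnDeriv_lt_top Q (P + Q)] with x h1 h2 h3 h4 h5
  rw [h1, Pi.add_apply, h2, h3, Pi.smul_apply, Pi.smul_apply, smul_eq_mul, smul_eq_mul,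
    ENNReal.toReal_add (ENNReal.mul_ne_top ENNReal.ofReal_ne_top h4.ne)
      (ENNReal.mul_ne_top ENNReal.ofReal_ne_top h5.ne),
    ENNReal.toReal_mul, ENNReal.toReal_mul, ENNReal.toReal_ofReal ha, ENNReal.toReal_ofReal hb]

end Aux

/-- `ε ↦ H²(P, (1−ε)P + εQ)` is nondecreasing on `[0,1]`; more precisely, for
`0 ≤ ε < ε′ ≤ 1`, `H²((1−ε)P + εQ, P) ≤ (ε/ε′)·H²((1−ε′)P + ε′Q, P)`. -/
theorem stmt8 {α : Type*} [MeasurableSpace α] (P Q : Measure α)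
    [IsProbabilityMeasure P] [IsProbabilityMeasure Q] :
    MonotoneOn (fun ε : ℝ =>
        sqHellinger P (ENNReal.ofReal (1 - ε) • P + ENNReal.ofReal ε • Q)) (Set.Icc 0 1) ∧
    ∀ ε ε' : ℝ, 0 ≤ ε → ε < ε' → ε' ≤ 1 →
      sqHellinger (ENNReal.ofReal (1 - ε) • P + ENNReal.ofReal ε • Q) P
        ≤ (ε / ε') * sqHellinger (ENNReal.ofReal (1 - ε') • P + ENNReal.ofReal ε' • Q) P := by
  set σ : Measure α := P + Q with hσdef
  have hPσ : P ≪ σ := fun s hs => by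
    rw [hσdef, Measure.coe_add, Pi.add_apply, add_eq_zero] at hs; exact hs.1
  have hQσ : Q ≪ σ := fun s hs => by
    rw [hσdef, Measure.coe_add, Pi.add_apply, add_eq_zero] at hs; exact hs.2
  set p : α → ℝ := fun x => (P.rnDeriv σ x).toReal with hpdef
  set q : α → ℝ := fun x => (Q.rnDeriv σ x).toReal with hqdef
  have hp0 : ∀ x, 0 ≤ p x := fun x => ENNReal.toReal_nonneg
  have hq0 : ∀ x, 0 ≤ q x := fun x => ENNReal.toReal_nonneg
  set I : ℝ → ℝ := fun ε =>
    ∫ x, (Real.sqrt ((1 - ε) * p x + ε * q x) - Real.sqrt (p x)) ^ 2 ∂σ with hIdef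
  have hmixac : ∀ ε : ℝ, (ENNReal.ofReal (1 - ε) • P + ENNReal.ofReal ε • Q) ≪ σ := fun ε =>
    Measure.AbsolutelyContinuous.add_left_iff.mpr ⟨hPσ.smul_left _, hQσ.smul_left _⟩
  have hmp : Measurable p := (Measure.measurable_rnDeriv P σ).ennreal_toReal
  have hmq : Measurable q := (Measure.measurable_rnDeriv Q σ).ennreal_toReal
  -- the two key rewritings
  have key1 : ∀ ε : ℝ, 0 ≤ ε → ε ≤ 1 →
      sqHellinger (ENNReal.ofReal (1 - ε) • P + ENNReal.ofReal ε • Q) P = I ε := by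
    intro ε h0 h1
    haveI := isFiniteMeasure_mix' P Q (1 - ε) ε
    rw [sqHellinger_eq_base' _ _ σ (hmixac ε) hPσ]
    refine integral_congr_ae ?_
    filter_upwards [mix_rnDeriv_toReal' P Q (by linarith : (0:ℝ) ≤ 1 - ε) h0] with x hx
    rw [hx]
  have key2 : ∀ ε : ℝ, 0 ≤ ε → ε ≤ 1 →
      sqHellinger P (ENNReal.ofReal (1 - ε) • P + ENNReal.ofReal ε • Q) = I ε := by
    intro ε h0 h1
    haveI := isFiniteMeasure_mix' P Q (1 - ε) ε
    rw [sqHellinger_eq_base' _ _ σ hPσ (hmixac ε)]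
    refine integral_congr_ae ?_
    filter_upwards [mix_rnDeriv_toReal' P Q (by linarith : (0:ℝ) ≤ 1 - ε) h0] with x hx
    rw [hx]; ring
  -- integrability
  have hpint : Integrable p σ := Measure.integrable_toReal_rnDeriv
  have hqint : Integrable q σ := Measure.integrable_toReal_rnDeriv
  have hint : ∀ ε : ℝ, 0 ≤ ε → ε ≤ 1 →
      Integrable (fun x => (Real.sqrt ((1 - ε) * p x + ε * q x) - Real.sqrt (p x)) ^ 2) σ := by
    intro ε h0 h1
    refine Integrable.mono' ((hpint.const_mul 2).add hqint) ?_
      (Filter.Eventually.of_forall fun x => ?_)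
    · exact (((((hmp.const_mul (1 - ε)).add (hmq.const_mul ε)).sqrt.sub
        hmp.sqrt).pow_const 2)).aestronglyMeasurable
    · have hmix0 : 0 ≤ (1 - ε) * p x + ε * q x :=
        add_nonneg (mul_nonneg (by linarith) (hp0 x)) (mul_nonneg h0 (hq0 x))
      rw [Real.norm_eq_abs, abs_of_nonneg (sq_nonneg _)]
      have := sqrt_sub_sq_le_add' hmix0 (hp0 x)
      have hpx := hp0 x; have hqx := hq0 x
      have hb : ((fun x => 2 * p x) + q) x = 2 * p x + q x := rfl
      rw [hb]
      nlinarith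
  -- core inequality at the level of I
  have hIcore : ∀ ε ε' : ℝ, 0 ≤ ε → ε < ε' → ε' ≤ 1 → I ε ≤ (ε / ε') * I ε' := by
    intro ε ε' h0 hlt h1
    have hε'pos : 0 < ε' := lt_of_le_of_lt h0 hlt
    rw [hIdef, ← integral_const_mul]
    refine integral_mono_of_nonneg (Filter.Eventually.of_forall fun x => sq_nonneg _)
      ((hint ε' hε'pos.le h1).const_mul _) (Filter.Eventually.of_forall fun x => ?_)
    simp only
    have hkey : (1 - ε) * p x + ε * q x
        = (ε / ε') * ((1 - ε') * p x + ε' * q x) + (1 - ε / ε') * p x := by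
      field_simp
      ring
    rw [hkey]
    exact ptwise' (div_nonneg h0 hε'pos.le) ((div_le_one hε'pos).mpr hlt.le)
      (add_nonneg (mul_nonneg (by linarith) (hp0 x)) (mul_nonneg hε'pos.le (hq0 x))) (hp0 x)
  have hInonneg : ∀ ε : ℝ, 0 ≤ I ε := fun ε => integral_nonneg fun x => sq_nonneg _
  constructor
  · intro ε hε ε' hε' hle
    obtain rfl | hlt := hle.eq_or_lt
    · exact le_rfl
    simp only
    rw [key2 ε hε.1 hε.2, key2 ε' hε'.1 hε'.2]
    have hε'pos : 0 < ε' := lt_of_le_of_lt hε.1 hlt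
    calc I ε ≤ (ε / ε') * I ε' := hIcore ε ε' hε.1 hlt hε'.2
      _ ≤ 1 * I ε' := by
          exact mul_le_mul_of_nonneg_right ((div_le_one hε'pos).mpr hlt.le) (hInonneg ε')
      _ = I ε' := one_mul _
  · intro ε ε' h0 hlt h1
    rw [key1 ε h0 (le_of_lt (lt_of_lt_of_le hlt h1)), key1 ε' (h0.trans hlt.le) h1]
    exact hIcore ε ε' h0 hlt h1
end

section
/- For any random variable X with distribution P on ℝ and any u ∈ ℝ, sup over the essential support of P of the function x ↦ (−x² + 2ux − u² + (u²∧1)/2), maximized over u ∈ ℝ, equals β*_IDJ(‖X‖_∞²) − 1/2, where β*_IDJ(r) = 1/2 + r for 0 < r ≤ 1/4 and 1 − (1−√r)₊² for r > 1/4; equivalently, ess sup_X sup_{u∈ℝ} {−X² + 2uX − u² + (u²∧1)/2} = β*_IDJ(ess sup X²) − 1/2. -/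
open MeasureTheory

/-- The Ingster–Donoho–Jin detection boundary `β*_IDJ`, extended to `EReal` arguments
(with value `1` at `+∞`): `β*_IDJ(r) = 1/2 + r` for `r ≤ 1/4` and `1 − (1−√r)₊²` for
`r > 1/4`. -/
noncomputable def betaIDJ (r : EReal) : ℝ :=
  if r = ⊤ then 1
  else if r.toReal ≤ 1 / 4 then 1 / 2 + r.toReal
  else 1 - (max (1 - Real.sqrt r.toReal) 0) ^ 2

/-- Auxiliary: `β*_IDJ(t) − 1/2` for finite arguments. -/
noncomputable def phiIDJ (t : ℝ) : ℝ :=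
  if t ≤ 1 / 4 then t else 1 / 2 - (max (1 - Real.sqrt t) 0) ^ 2

lemma sqrt_gt_half {t : ℝ} (ht : ¬ t ≤ 1 / 4) : 1 / 2 < Real.sqrt t := by
  have h0 : (0:ℝ) ≤ t := by nlinarith [not_le.1 ht]
  nlinarith [Real.sq_sqrt h0, Real.sqrt_nonneg t, not_le.1 ht]

lemma phiIDJ_le_half (t : ℝ) : phiIDJ t ≤ 1 / 2 := by
  unfold phiIDJ
  split_ifs with h
  · linarith
  · nlinarith [sq_nonneg (max (1 - Real.sqrt t) 0)]

lemma phiIDJ_nonneg {t : ℝ} (ht : 0 ≤ t) : 0 ≤ phiIDJ t := by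
  unfold phiIDJ
  split_ifs with h
  · exact ht
  · have hs := sqrt_gt_half h
    have hm : max (1 - Real.sqrt t) 0 ≤ 1 / 2 := max_le (by linarith) (by norm_num)
    have hm0 : (0:ℝ) ≤ max (1 - Real.sqrt t) 0 := le_max_right _ _
    nlinarith

lemma phiIDJ_one {t : ℝ} (h : 1 ≤ t) : phiIDJ t = 1 / 2 := by
  unfold phiIDJ
  rw [if_neg (by push_neg; linarith)]
  have h1 : (1:ℝ) ≤ Real.sqrt t := by
    nlinarith [Real.sq_sqrt (by linarith : (0:ℝ) ≤ t), Real.sqrt_nonneg t]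
  rw [max_eq_right (by linarith)]
  norm_num

lemma phiIDJ_mono {t r : ℝ} (ht : 0 ≤ t) (htr : t ≤ r) : phiIDJ t ≤ phiIDJ r := by
  unfold phiIDJ
  split_ifs with h1 h2 h2
  · exact htr
  · have hv := sqrt_gt_half h2
    rcases le_total (Real.sqrt r) 1 with hle | hle
    · rw [max_eq_left (by linarith)]
      nlinarith
    · rw [max_eq_right (by linarith)]
      linarith
  · exact absurd (htr.trans h2) h1
  · have hsv : Real.sqrt t ≤ Real.sqrt r := Real.sqrt_le_sqrt htr
    have hmm : max (1 - Real.sqrt r) 0 ≤ max (1 - Real.sqrt t) 0 :=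
      max_le_max (by linarith) le_rfl
    nlinarith [le_max_right (1 - Real.sqrt r) (0:ℝ)]

lemma phiIDJ_lip {t r : ℝ} (ht : 0 ≤ t) (htr : t ≤ r) : phiIDJ r - phiIDJ t ≤ r - t := by
  have hr0 : 0 ≤ r := ht.trans htr
  have hs2 := Real.sq_sqrt ht
  have hv2 := Real.sq_sqrt hr0
  have hs0 := Real.sqrt_nonneg t
  have hv0 := Real.sqrt_nonneg r
  have hsv : Real.sqrt t ≤ Real.sqrt r := Real.sqrt_le_sqrt htr
  unfold phiIDJ
  split_ifs with h1 h2 h2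
  · linarith
  · exact absurd (htr.trans h1) h2
  · have hv := sqrt_gt_half h1
    rcases le_total (1 - Real.sqrt r) 0 with hb | hb
    · rw [max_eq_right hb]
      nlinarith
    · rw [max_eq_left hb]
      nlinarith [sq_nonneg (Real.sqrt r - 1/2)]
  · have hs12 := sqrt_gt_half h2
    have hv12 := sqrt_gt_half h1
    rcases le_total (1 - Real.sqrt t) 0 with hbs | hbs
    · rw [max_eq_right hbs]
      rcases le_total (1 - Real.sqrt r) 0 with hbv | hbv
      · rw [max_eq_right hbv]
        nlinarith [mul_nonneg (by linarith : (0:ℝ) ≤ Real.sqrt r - Real.sqrt t)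
          (by linarith : (0:ℝ) ≤ Real.sqrt r + Real.sqrt t)]
      · rw [max_eq_left hbv]
        nlinarith [mul_nonneg (by linarith : (0:ℝ) ≤ Real.sqrt r - Real.sqrt t)
          (by linarith : (0:ℝ) ≤ Real.sqrt r + Real.sqrt t), sq_nonneg (1 - Real.sqrt r)]
    · rw [max_eq_left hbs]
      rcases le_total (1 - Real.sqrt r) 0 with hbv | hbv
      · rw [max_eq_right hbv]
        nlinarith [mul_nonneg hs0 (by linarith : (0:ℝ) ≤ 1 - Real.sqrt t)]
      · rw [max_eq_left hbv]
        nlinarith [mul_nonneg (by linarith : (0:ℝ) ≤ Real.sqrt r - Real.sqrt t)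
          (by linarith : (0:ℝ) ≤ Real.sqrt t + Real.sqrt r - 1)]

lemma inner_le_phiIDJ (x u : ℝ) :
    -(x ^ 2) + 2 * u * x - u ^ 2 + min (u ^ 2) 1 / 2 ≤ phiIDJ (x ^ 2) := by
  unfold phiIDJ
  split_ifs with h
  · rcases le_total (u ^ 2) 1 with hu | hu
    · rw [min_eq_left hu]; nlinarith [sq_nonneg (2 * x - u)]
    · rw [min_eq_right hu]; nlinarith [sq_nonneg (2 * x - u)]
  · rw [Real.sqrt_sq_eq_abs]
    have ha2 : |x| ^ 2 = x ^ 2 := sq_abs x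
    have ha0 : (0:ℝ) ≤ |x| := abs_nonneg x
    have ha : 1 / 2 < |x| := by nlinarith [not_le.1 h]
    have hux : u * x ≤ |u| * |x| := by rw [← abs_mul]; exact le_abs_self _
    have hm0 : (0:ℝ) ≤ |u| := abs_nonneg u
    have hm2 : |u| ^ 2 = u ^ 2 := sq_abs u
    rcases le_total (1 - |x|) 0 with hb | hb
    · rw [max_eq_right hb]
      rcases le_total (u ^ 2) 1 with hu | hu
      · rw [min_eq_left hu]; nlinarith [sq_nonneg (x - u)]
      · rw [min_eq_right hu]; nlinarith [sq_nonneg (x - u)]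
    · rw [max_eq_left hb]
      rcases le_total (u ^ 2) 1 with hu | hu
      · rw [min_eq_left hu]
        have hmu : |u| ≤ 1 := by nlinarith
        nlinarith [mul_nonneg (by linarith : (0:ℝ) ≤ 1 - |u|)
          (by linarith : (0:ℝ) ≤ 4 * |x| - 1 - |u|)]
      · rw [min_eq_right hu]
        have hmu : (1:ℝ) ≤ |u| := by nlinarith
        nlinarith [mul_nonneg (by linarith : (0:ℝ) ≤ |u| - 1)
          (by linarith : (0:ℝ) ≤ |u| + 1 - 2 * |x|)]

lemma exists_inner_eq_phiIDJ (x : ℝ) :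
    ∃ u : ℝ, -(x ^ 2) + 2 * u * x - u ^ 2 + min (u ^ 2) 1 / 2 = phiIDJ (x ^ 2) := by
  unfold phiIDJ
  rcases le_or_gt (x ^ 2) (1 / 4) with h | h
  · refine ⟨2 * x, ?_⟩
    rw [if_pos h, min_eq_left (by nlinarith)]
    ring
  · rw [if_neg (not_le.2 h), Real.sqrt_sq_eq_abs]
    have ha : 1 / 2 < |x| := by nlinarith [sq_abs x, abs_nonneg x]
    rcases le_total 1 |x| with hb | hb
    · refine ⟨x, ?_⟩
      rw [max_eq_right (by linarith), min_eq_right (by nlinarith [sq_abs x])]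
      ring
    · refine ⟨if 0 ≤ x then 1 else -1, ?_⟩
      rw [max_eq_left (by linarith)]
      split_ifs with hx
      · rw [abs_of_nonneg hx]
        simp only [one_pow, min_self]
        ring
      · rw [abs_of_neg (not_le.1 hx)]
        simp only [neg_one_sq, min_self]
        ring

lemma iSup_eq_phiIDJ (x : ℝ) :
    (⨆ u : ℝ, (-(x ^ 2) + 2 * u * x - u ^ 2 + min (u ^ 2) 1 / 2)) = phiIDJ (x ^ 2) := by
  obtain ⟨u0, hu0⟩ := exists_inner_eq_phiIDJ x
  refine le_antisymm (ciSup_le fun u => inner_le_phiIDJ x u) ?_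
  calc phiIDJ (x ^ 2)
      = -(x ^ 2) + 2 * u0 * x - u0 ^ 2 + min (u0 ^ 2) 1 / 2 := hu0.symm
    _ ≤ _ := le_ciSup ⟨phiIDJ (x ^ 2), by rintro y ⟨u, rfl⟩; exact inner_le_phiIDJ x u⟩ u0

/-- For any random variable `X` with distribution `P` on `ℝ`,
`ess sup_X sup_{u ∈ ℝ} {−X² + 2uX − u² + (u²∧1)/2} = β*_IDJ(ess sup X²) − 1/2`, where the
essential supremum is taken with respect to `P` (and `ess sup X²` is computed in `EReal`,
so that the unbounded case yields `β*_IDJ(+∞) = 1`). -/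
theorem stmt19 (P : Measure ℝ) [IsProbabilityMeasure P] :
    essSup (fun x : ℝ => ⨆ u : ℝ, (-(x ^ 2) + 2 * u * x - u ^ 2 + min (u ^ 2) 1 / 2)) P
      = betaIDJ (essSup (fun x : ℝ => ((x ^ 2 : ℝ) : EReal)) P) - 1 / 2 := by
  have hgfun : (fun x : ℝ => ⨆ u : ℝ, (-(x ^ 2) + 2 * u * x - u ^ 2 + min (u ^ 2) 1 / 2))
      = fun x : ℝ => phiIDJ (x ^ 2) := funext iSup_eq_phiIDJ
  rw [hgfun]
  set R := essSup (fun x : ℝ => ((x ^ 2 : ℝ) : EReal)) P with hRdef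
  have hgle : ∀ x : ℝ, phiIDJ (x ^ 2) ≤ 1 / 2 := fun x => phiIDJ_le_half _
  have hg0 : ∀ x : ℝ, 0 ≤ phiIDJ (x ^ 2) := fun x => phiIDJ_nonneg (sq_nonneg x)
  have hSbd : BddBelow {a : ℝ | P {x | a < phiIDJ (x ^ 2)} = 0} := by
    refine ⟨0, fun a ha => ?_⟩
    simp only [Set.mem_setOf_eq] at ha
    by_contra hcon
    push_neg at hcon
    have huniv : {x : ℝ | a < phiIDJ (x ^ 2)} = Set.univ :=
      Set.eq_univ_of_forall fun x => lt_of_lt_of_le hcon (hg0 x)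
    rw [huniv] at ha
    simpa using ha
  have hSmem : P {x : ℝ | 1 / 2 < phiIDJ (x ^ 2)} = 0 := by
    have : {x : ℝ | 1 / 2 < phiIDJ (x ^ 2)} = (∅ : Set ℝ) :=
      Set.eq_empty_iff_forall_notMem.2 fun x hx => absurd hx (not_lt.2 (hgle x))
    rw [this]; exact measure_empty
  have hupper : ∀ b : ℝ, (∀ᵐ x ∂P, phiIDJ (x ^ 2) ≤ b) →
      essSup (fun x : ℝ => phiIDJ (x ^ 2)) P ≤ b := by
    intro b hb
    rw [essSup_eq_sInf]
    apply csInf_le hSbd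
    rw [ae_iff] at hb
    simpa only [not_le, Set.mem_setOf_eq] using hb
  have hlower : ∀ c : ℝ, P {x : ℝ | c ≤ phiIDJ (x ^ 2)} ≠ 0 →
      c ≤ essSup (fun x : ℝ => phiIDJ (x ^ 2)) P := by
    intro c hc
    rw [essSup_eq_sInf]
    refine le_csInf ⟨1 / 2, hSmem⟩ ?_
    intro a ha
    by_contra hcon
    push_neg at hcon
    exact hc (measure_mono_null (fun x hx => lt_of_lt_of_le hcon hx) ha)
  have hR0 : (0 : EReal) ≤ R := by
    by_contra hcon
    push_neg at hcon
    have hae := ae_lt_of_essSup_lt (f := fun x : ℝ => ((x ^ 2 : ℝ) : EReal)) (μ := P)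
      (x := (0 : EReal)) (by rw [← hRdef]; exact hcon)
    obtain ⟨x, hx⟩ := hae.exists
    exact absurd (EReal.coe_nonneg.2 (sq_nonneg x)) (not_le.2 hx)
  rcases eq_or_ne R ⊤ with hT | hT
  · have hbeta : betaIDJ ⊤ = 1 := by simp [betaIDJ]
    have h12 : (1 : ℝ) - 1 / 2 = 1 / 2 := by norm_num
    rw [hT, hbeta, h12]
    refine le_antisymm (hupper _ (Filter.Eventually.of_forall hgle)) (hlower _ ?_)
    intro h0
    have hsub : {x : ℝ | 1 ≤ x ^ 2} ⊆ {x : ℝ | 1 / 2 ≤ phiIDJ (x ^ 2)} := by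
      intro x hx
      simp only [Set.mem_setOf_eq] at hx ⊢
      rw [phiIDJ_one hx]
    have h1 : P {x : ℝ | 1 ≤ x ^ 2} = 0 := measure_mono_null hsub h0
    have hae : ∀ᵐ x ∂P, ((x ^ 2 : ℝ) : EReal) ≤ ((1 : ℝ) : EReal) := by
      rw [ae_iff]
      refine measure_mono_null ?_ h1
      intro x hx
      simp only [Set.mem_setOf_eq, not_le, EReal.coe_lt_coe_iff] at hx
      exact le_of_lt hx
    have hle : R ≤ ((1 : ℝ) : EReal) := essSup_le_of_ae_le _ hae
    rw [hT] at hle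
    exact absurd (top_le_iff.1 hle) (EReal.coe_ne_top 1)
  · have hbot : R ≠ ⊥ := fun h => by
      rw [h] at hR0
      exact absurd hR0 (by simp)
    set r := R.toReal with hrdef
    have hRr : ((r : ℝ) : EReal) = R := EReal.coe_toReal hT hbot
    have hr0 : 0 ≤ r := by
      rw [← EReal.coe_le_coe_iff, hRr]
      exact_mod_cast hR0
    have hRHS : betaIDJ R - 1 / 2 = phiIDJ r := by
      simp only [betaIDJ, phiIDJ, if_neg hT, ← hrdef]
      split_ifs <;> ring
    rw [hRHS]
    have hub : essSup (fun x : ℝ => phiIDJ (x ^ 2)) P ≤ phiIDJ r := by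
      apply hupper
      have hae := ae_le_essSup (μ := P) (f := fun x : ℝ => ((x ^ 2 : ℝ) : EReal))
      filter_upwards [hae] with x hx
      rw [← hRdef, ← hRr] at hx
      exact phiIDJ_mono (sq_nonneg x) (EReal.coe_le_coe_iff.1 hx)
    have hlb : phiIDJ r ≤ essSup (fun x : ℝ => phiIDJ (x ^ 2)) P := by
      rcases eq_or_lt_of_le hr0 with h0 | h0
      · have hphir : phiIDJ r = 0 := by
          rw [← h0]
          unfold phiIDJ
          rw [if_pos (by norm_num)]
        rw [hphir]
        apply hlower
        have : {x : ℝ | (0 : ℝ) ≤ phiIDJ (x ^ 2)} = Set.univ := Set.eq_univ_of_forall hg0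
        rw [this]
        simp
      · apply le_of_forall_lt
        intro c hc
        set t := max (r - (phiIDJ r - c) / 2) (r / 2) with htdef
        have ht0 : 0 ≤ t := le_trans (by linarith) (le_max_right _ _)
        have htr : t < r := max_lt (by linarith) (by linarith)
        have hphit : c < phiIDJ t := by
          have h1 : phiIDJ r - phiIDJ t ≤ r - t := phiIDJ_lip ht0 htr.le
          have h2 : r - (phiIDJ r - c) / 2 ≤ t := le_max_left _ _
          linarith
        refine lt_of_lt_of_le hphit (hlower (phiIDJ t) ?_)
        intro hnull
        have hsub : {x : ℝ | t < x ^ 2} ⊆ {x : ℝ | phiIDJ t ≤ phiIDJ (x ^ 2)} :=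
          fun x hx => phiIDJ_mono ht0 (le_of_lt hx)
        have h2 : P {x : ℝ | t < x ^ 2} = 0 := measure_mono_null hsub hnull
        have hae : ∀ᵐ x ∂P, ((x ^ 2 : ℝ) : EReal) ≤ ((t : ℝ) : EReal) := by
          rw [ae_iff]
          refine measure_mono_null ?_ h2
          intro x hx
          simp only [Set.mem_setOf_eq, not_le, EReal.coe_lt_coe_iff] at hx
          exact hx
        have hRle : R ≤ ((t : ℝ) : EReal) := essSup_le_of_ae_le _ hae
        rw [← hRr] at hRle
        exact absurd (EReal.coe_le_coe_iff.1 hRle) (not_le.2 htr)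
    exact le_antisymm hub hlb
end
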